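/- Let G be a subgroup of W = V ⋊ S_4 such that the projection p : G → S_4 is surjective and the kernel of p restricted to G is exactly {(0, id), σ}, i.e. G ∩ V = {0, ε}. Then no element w ∈ V has G-orbit of cardinality exactly 4 under the affine action of G on V. -/
import Mathlib

/-- `V = (ℤ/2ℤ)⁴`. -/
abbrev V4 : Type := Fin 4 → ZMod 2

/-- The action of `S₄` on `V = (ℤ/2ℤ)⁴` permuting the coordinates,
as an additive automorphism. -/
def permAddEquiv (π : Equiv.Perm (Fin 4)) : V4 ≃+ V4 where
  toFun w := fun i => w (π⁻¹ i)
  invFun w := fun i => w (π i)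
  left_inv w := by funext i; simp
  right_inv w := by funext i; simp
  map_add' w₁ w₂ := rfl

/-- The corresponding homomorphism `S₄ →* Aut(V)` (with `V` written
multiplicatively so as to form the semidirect product). -/
def permHom : Equiv.Perm (Fin 4) →* MulAut (Multiplicative V4) where
  toFun π := AddEquiv.toMultiplicative (permAddEquiv π)
  map_one' := by ext w; rfl
  map_mul' π₁ π₂ := by ext w; rfl

/-- `W = V ⋊ S₄`. -/
abbrev W4 : Type := SemidirectProduct (Multiplicative V4) (Equiv.Perm (Fin 4)) permHom

/-- `ε = (1,1,1,1) ∈ V`. -/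
def epsV : V4 := fun _ => 1

/-- `σ = (ε, id) ∈ W`, the translation by `ε`. -/
def sigmaW : W4 := SemidirectProduct.inl (Multiplicative.ofAdd epsV)

/-- The affine action of `W = V ⋊ S₄` on `V`: `(v, π) · w = π(w) + v`. -/
def aff (g : W4) (w : V4) : V4 :=
  fun i => w (g.right⁻¹ i) + Multiplicative.toAdd g.left i

private lemma toAdd_permHom (π : Equiv.Perm (Fin 4)) (m : Multiplicative V4) (i : Fin 4) :
    Multiplicative.toAdd (permHom π m) i = Multiplicative.toAdd m (π⁻¹ i) := rfl

private lemma aff_mul (g h : W4) (u : V4) : aff (g * h) u = aff g (aff h u) := by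
  funext i
  simp [aff, SemidirectProduct.mul_left, SemidirectProduct.mul_right, toAdd_mul,
    toAdd_permHom, mul_inv_rev, Equiv.Perm.mul_apply]
  ring

private lemma aff_one (u : V4) : aff 1 u = u := by
  funext i; simp [aff]

/-- shifting by a constant vector. -/
private def shf (c : ZMod 2) (v : V4) : V4 := fun i => v i + c

private lemma aff_sigma (u : V4) : aff sigmaW u = shf 1 u := by
  funext i; simp [aff, sigmaW, epsV, shf]

private lemma aff_shf (g : W4) (c : ZMod 2) (v : V4) :
    aff g (shf c v) = shf c (aff g v) := by
  funext i; simp [aff, shf]; ring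

private lemma shf_shf (c d : ZMod 2) (v : V4) : shf c (shf d v) = shf (c + d) v := by
  funext i; simp [shf]; ring

private lemma shf_zero (v : V4) : shf 0 v = v := by funext i; simp [shf]

private lemma shf_cancel {a b : ZMod 2} {x y : V4} (h : shf a x = shf b y) :
    x = shf (a + b) y := by
  funext i
  have h2 := congrFun h i
  simp only [shf] at h2 ⊢
  revert h2
  have : ∀ p q r s : ZMod 2, p + r = q + s → p = q + (r + s) := by decide
  exact this _ _ _ _

private lemma aff_inj (g : W4) {u v : V4} (h : aff g u = aff g v) : u = v := by
  have h2 := congrArg (aff g⁻¹) h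
  rwa [← aff_mul, ← aff_mul, inv_mul_cancel, aff_one, aff_one] at h2

private def rho1 : Equiv.Perm (Fin 4) := Equiv.swap 0 1 * Equiv.swap 1 2
private def rho2 : Equiv.Perm (Fin 4) := Equiv.swap 1 2 * Equiv.swap 2 3

private lemma rho1_cube : rho1 * rho1 * rho1 = 1 := by decide
private lemma rho2_cube : rho2 * rho2 * rho2 = 1 := by decide

private lemma master (z : V4) (d1 d2 : ZMod 2)
    (h1 : ∀ i, z i + z (rho1⁻¹ i) = d1)
    (h2 : ∀ i, z i + z (rho2⁻¹ i) = d2) :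
    ∃ c : ZMod 2, ∀ i, z i = c := by
  revert h1 h2; revert d1 d2; revert z; decide

private lemma add_add_cancel2 : ∀ c d : ZMod 2, c + d + c = d := by decide

private lemma zsolve : ∀ a b e g : ZMod 2, b + a = e + g → a = e + g + b := by decide

private lemma helper9 : ∀ a b c d e f g h : ZMod 2,
    d + f + (a + g + b) = c + h + e → e + a + c + (f + b + d) = g + h := by decide

private lemma hfin : ∀ e a b c : ZMod 2, e + a + b = c → b + e = a + c := by decide

private lemma zmod2_cases (c : ZMod 2) : c = 0 ∨ c = 1 := by revert c; decide

/-- **No orbit of size 4.**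
Let `G ≤ W = V ⋊ S₄` be a subgroup such that the projection `p : G → S₄` is
surjective and the kernel of `p` restricted to `G` is exactly `{1, σ}` (i.e.
`G ∩ V = {0, ε}`).  Then no element `w ∈ V` has `G`-orbit of cardinality
exactly 4 under the affine action of `G` on `V`. -/
theorem no_orbit_of_size_four
    (G : Subgroup W4)
    (hsurj : ∀ π : Equiv.Perm (Fin 4), ∃ g ∈ G, g.right = π)
    (hσ : sigmaW ∈ G)
    (hker : ∀ g ∈ G, g.right = 1 → g = 1 ∨ g = sigmaW) :
    ∀ w : V4, Set.ncard {u : V4 | ∃ g ∈ G, aff g w = u} ≠ 4 := by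
  intro w hcard
  set O := {u : V4 | ∃ g ∈ G, aff g w = u} with hOdef
  -- trivial elements of the orbit are "P" elements
  have hPone : ∃ c : ZMod 2, aff (1 : W4) w = shf c w := ⟨0, by rw [aff_one, shf_zero]⟩
  have hPsigma : ∃ c : ZMod 2, aff sigmaW w = shf c w := ⟨1, aff_sigma w⟩
  have hPker : ∀ g ∈ G, g.right = 1 → ∃ c : ZMod 2, aff g w = shf c w := by
    intro g hg hr
    rcases hker g hg hr with rfl | rfl
    · exact hPone
    · exact hPsigma
  -- there exists a non-"P" element
  have hex : ∃ h₀ ∈ G, ¬ ∃ c : ZMod 2, aff h₀ w = shf c w := by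
    by_contra hall
    push_neg at hall
    have hsub : O ⊆ {w, shf 1 w} := by
      rintro v ⟨g, hg, rfl⟩
      obtain ⟨c, hc⟩ := hall g hg
      rcases zmod2_cases c with rfl | rfl
      · left; rw [hc, shf_zero]
      · right; rw [hc]; rfl
    have h2 : O.ncard ≤ 2 :=
      le_trans (Set.ncard_le_ncard hsub (Set.toFinite _))
        (le_trans (Set.ncard_insert_le _ _) (by simp))
    omega
  obtain ⟨h₀, h₀G, hPh₀⟩ := hex
  set x := aff h₀ w with hxdef
  have hxw : ∀ c : ZMod 2, x ≠ shf c w := fun c hc => hPh₀ ⟨c, hc⟩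
  have hne1 : ∀ v : V4, shf 1 v ≠ v := by
    intro v h
    have h2 := congrFun h 0
    simp only [shf] at h2
    exact absurd h2 (by revert h2; generalize v 0 = a; revert a; decide)
  -- the four distinct elements
  have d1 : w ≠ shf 1 w := fun h => hne1 w h.symm
  have d2 : x ≠ w := by have := hxw 0; rwa [shf_zero] at this
  have d3 : x ≠ shf 1 w := hxw 1
  have d4 : shf 1 x ≠ w := by
    intro h
    rw [← shf_zero w] at h
    have := shf_cancel h
    simp only [add_zero] at this
    exact hxw 1 this
  have d5 : shf 1 x ≠ shf 1 w := by
    intro h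
    have := shf_cancel h
    rw [show (1 + 1 : ZMod 2) = 0 from by decide] at this
    exact hxw 0 this
  have d6 : shf 1 x ≠ x := hne1 x
  -- S = the explicit four-element set equals the orbit
  have hOw : w ∈ O := ⟨1, G.one_mem, aff_one w⟩
  have hOw1 : shf 1 w ∈ O := ⟨sigmaW, hσ, aff_sigma w⟩
  have hOx : x ∈ O := ⟨h₀, h₀G, rfl⟩
  have hOx1 : shf 1 x ∈ O := ⟨sigmaW * h₀, mul_mem hσ h₀G, by rw [aff_mul, ← hxdef, aff_sigma]⟩
  have hSsub : ({w, shf 1 w, x, shf 1 x} : Set V4) ⊆ O := by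
    intro v hv
    simp only [Set.mem_insert_iff, Set.mem_singleton_iff] at hv
    rcases hv with rfl | rfl | rfl | rfl <;> assumption
  have hS4 : ({w, shf 1 w, x, shf 1 x} : Set V4).ncard = 4 := by
    rw [Set.ncard_insert_of_notMem
          (by simp only [Set.mem_insert_iff, Set.mem_singleton_iff]; push_neg
              exact ⟨d1, d2.symm, d4.symm⟩),
        Set.ncard_insert_of_notMem
          (by simp only [Set.mem_insert_iff, Set.mem_singleton_iff]; push_neg
              exact ⟨d3.symm, d5.symm⟩),
        Set.ncard_insert_of_notMem (by simpa using d6.symm),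
        Set.ncard_singleton]
  have hSO : ({w, shf 1 w, x, shf 1 x} : Set V4) = O :=
    Set.eq_of_subset_of_ncard_le hSsub (by rw [hcard, hS4]) (Set.toFinite _)
  -- membership lemma
  have hmem : ∀ g ∈ G, (∃ c : ZMod 2, aff g w = shf c w) ∨ (∃ c : ZMod 2, aff g w = shf c x) := by
    intro g hg
    have h1 : aff g w ∈ ({w, shf 1 w, x, shf 1 x} : Set V4) := by
      rw [hSO]; exact ⟨g, hg, rfl⟩
    rcases h1 with h | h | h | h
    · exact Or.inl ⟨0, by rw [h, shf_zero]⟩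
    · exact Or.inl ⟨1, h⟩
    · exact Or.inr ⟨0, by rw [h, shf_zero]⟩
    · exact Or.inr ⟨1, h⟩
  have hNgw : ∀ g ∈ G, (¬ ∃ c : ZMod 2, aff g w = shf c w) → ∃ c : ZMod 2, aff g w = shf c x :=
    fun g hg hn => (hmem g hg).resolve_left hn
  have hgxmem : ∀ g ∈ G, (∃ c : ZMod 2, aff g x = shf c w) ∨ (∃ c : ZMod 2, aff g x = shf c x) := by
    intro g hg
    have := hmem (g * h₀) (mul_mem hg h₀G)
    rwa [aff_mul, ← hxdef] at this
  -- P-elements preserve the pair {x, x+ε}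
  have hPx : ∀ g ∈ G, (∃ c : ZMod 2, aff g w = shf c w) → ∃ c : ZMod 2, aff g x = shf c x := by
    rintro g hg ⟨c, hc⟩
    rcases hgxmem g hg with ⟨d, hd⟩ | h
    · exfalso
      have h1 : aff g (shf (c + d) w) = aff g x := by
        rw [aff_shf, hc, shf_shf, add_add_cancel2 c d, ← hd]
      exact hxw (c + d) (aff_inj g h1.symm)
    · exact h
  -- non-P-elements swap the pairs
  have hNx : ∀ g ∈ G, (¬ ∃ c : ZMod 2, aff g w = shf c w) → ∃ c : ZMod 2, aff g x = shf c w := by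
    intro g hg hn
    obtain ⟨e, he⟩ := hNgw g hg hn
    rcases hgxmem g hg with h | ⟨d, hd⟩
    · exact h
    · exfalso
      have h1 : aff g (shf (e + d) w) = aff g x := by
        rw [aff_shf, he, shf_shf, add_add_cancel2 e d, ← hd]
      exact hxw (e + d) (aff_inj g h1.symm)
  -- multiplication rules
  have hNN : ∀ g ∈ G, ∀ h ∈ G, (¬ ∃ c : ZMod 2, aff g w = shf c w) →
      (¬ ∃ c : ZMod 2, aff h w = shf c w) → ∃ c : ZMod 2, aff (g * h) w = shf c w := by
    intro g hg h hh hng hnh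
    obtain ⟨e, he⟩ := hNgw h hh hnh
    obtain ⟨d, hd⟩ := hNx g hg hng
    exact ⟨e + d, by rw [aff_mul, he, aff_shf, hd, shf_shf]⟩
  have hPN : ∀ g ∈ G, ∀ h ∈ G, (∃ c : ZMod 2, aff g w = shf c w) →
      (¬ ∃ c : ZMod 2, aff h w = shf c w) → ¬ ∃ c : ZMod 2, aff (g * h) w = shf c w := by
    rintro g hg h hh hp hnh ⟨c, hc⟩
    obtain ⟨e, he⟩ := hNgw h hh hnh
    obtain ⟨d, hd⟩ := hPx g hg hp
    have h1 : shf (e + d) x = shf c w := by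
      rw [← hc, aff_mul, he, aff_shf, hd, shf_shf]
    exact hxw _ (shf_cancel h1)
  -- elements over order-3 permutations are P-elements
  have hF : ∀ g ∈ G, g.right * g.right * g.right = 1 → ∃ c : ZMod 2, aff g w = shf c w := by
    intro g hg h3
    by_contra hn
    have h2 := hNN g hg g hg hn hn
    have h3' := hPN (g * g) (mul_mem hg hg) g hg h2 hn
    exact h3' (hPker (g * g * g) (mul_mem (mul_mem hg hg) hg)
      (by simp only [SemidirectProduct.mul_right]; exact h3))
  -- the key cocycle computation
  have hzcond : ∀ ρ : Equiv.Perm (Fin 4), ρ * ρ * ρ = 1 → ∃ d : ZMod 2, ∀ i,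
      (Multiplicative.toAdd h₀.left i + w i + w (h₀.right⁻¹ i)) +
      (Multiplicative.toAdd h₀.left (ρ⁻¹ i) + w (ρ⁻¹ i) + w (h₀.right⁻¹ (ρ⁻¹ i))) = d := by
    intro ρ hρ
    obtain ⟨gp, hgpG, hgpr⟩ := hsurj (h₀.right⁻¹ * ρ * h₀.right)
    have hgp3 : gp.right * gp.right * gp.right = 1 := by
      rw [hgpr]
      have h1 : (h₀.right⁻¹ * ρ * h₀.right) * (h₀.right⁻¹ * ρ * h₀.right) *
          (h₀.right⁻¹ * ρ * h₀.right) = h₀.right⁻¹ * (ρ * ρ * ρ) * h₀.right := by group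
      rw [h1, hρ, mul_one, inv_mul_cancel]
    obtain ⟨cp, hcp⟩ := hF gp hgpG hgp3
    have hconjG : h₀ * gp * h₀⁻¹ ∈ G := mul_mem (mul_mem h₀G hgpG) (inv_mem h₀G)
    have hconjr : (h₀ * gp * h₀⁻¹).right = ρ := by
      simp only [SemidirectProduct.mul_right, SemidirectProduct.inv_right, hgpr]
      group
    obtain ⟨c', hc'⟩ := hF _ hconjG (by rw [hconjr]; exact hρ)
    -- the value of the left component of the conjugate
    have hvconj : ∀ i, Multiplicative.toAdd (h₀ * gp * h₀⁻¹).left i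
        = w i + c' + w (ρ⁻¹ i) := by
      intro i
      have h2 := congrFun hc' i
      simp only [aff, shf, hconjr] at h2
      exact zsolve _ _ _ _ h2
    have hEq2 : aff (h₀ * gp * h₀⁻¹) (aff h₀ w) = aff h₀ (shf cp w) := by
      rw [← hcp, ← aff_mul, ← aff_mul]
      group
    refine ⟨c' + cp, fun i => ?_⟩
    have hL := congrFun hEq2 i
    simp only [aff, shf, hconjr, hvconj] at hL
    exact helper9 _ _ _ _ _ _ _ _ hL
  obtain ⟨dd1, hdd1⟩ := hzcond rho1 rho1_cube
  obtain ⟨dd2, hdd2⟩ := hzcond rho2 rho2_cube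
  obtain ⟨c, hc⟩ := master
    (fun i => Multiplicative.toAdd h₀.left i + w i + w (h₀.right⁻¹ i)) dd1 dd2 hdd1 hdd2
  apply hPh₀
  refine ⟨c, ?_⟩
  rw [hxdef]
  funext i
  simp only [aff, shf]
  exact hfin _ _ _ _ (hc i)
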